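/- Under the assumptions: (i) the candidate set contains all N edited subjects; (ii) the key matrix K and residual matrix R have full column rank N; (iii) the edited key vectors and non-edited candidate key vectors are δθ-separable on col(K); (iv) the covariance C is positive definite — the projection-based scoring ρ(k) = ‖Π_{col(V_N)} k‖/‖k‖ with col(V_N) = col(K) ranks all N edited subjects strictly above all non-edited candidates, and the angles arccos ρ of the N-th and (N+1)-th ranked candidates (in descending score order) differ by at least δθ. -/

import Mathlib

open Matrix
open scoped RealInnerProductSpace

/-- A column of a matrix, viewed as a vector of Euclidean space. -/
noncomputable def colVec {m n : ℕ} (M : Matrix (Fin m) (Fin n) ℝ) (j : Fin n) :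
    EuclideanSpace ℝ (Fin m) :=
  (WithLp.equiv 2 (Fin m → ℝ)).symm fun i => M i j

/-- The column space of a matrix as a subspace of Euclidean space. -/
noncomputable def colSpaceE {m n : ℕ} (M : Matrix (Fin m) (Fin n) ℝ) :
    Submodule ℝ (EuclideanSpace ℝ (Fin m)) :=
  Submodule.span ℝ (Set.range (colVec M))

/-- The projection score of a vector `k` on a subspace `U`: `‖Π_U k‖ / ‖k‖`. -/
noncomputable def score {d : ℕ} (U : Submodule ℝ (EuclideanSpace ℝ (Fin d)))
    (k : EuclideanSpace ℝ (Fin d)) : ℝ :=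
  ‖(U.orthogonalProjection k : EuclideanSpace ℝ (Fin d))‖ / ‖k‖

/-- The angle between a vector `k` and a subspace `U`: `arccos (score U k)`. -/
noncomputable def angleTo {d : ℕ} (U : Submodule ℝ (EuclideanSpace ℝ (Fin d)))
    (k : EuclideanSpace ℝ (Fin d)) : ℝ :=
  Real.arccos (score U k)

/-- A column of a product is a linear combination of the columns of the left factor. -/
lemma colVec_mul {m n p : ℕ} (A : Matrix (Fin m) (Fin n) ℝ) (B : Matrix (Fin n) (Fin p) ℝ)
    (j : Fin p) : colVec (A * B) j = ∑ l : Fin n, B l j • colVec A l := by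
  have hrw : ∀ {q : ℕ} (D : Matrix (Fin m) (Fin q) ℝ) (i : Fin q),
      colVec D i = (WithLp.linearEquiv 2 ℝ (Fin m → ℝ)).symm fun r => D r i := fun _ _ => by
    simp [colVec, WithLp.linearEquiv]
  rw [hrw]
  have : (fun r => (A * B) r j) = ∑ l : Fin n, B l j • fun r => A r l := by
    funext r
    simp [Matrix.mul_apply, Finset.sum_apply, mul_comm]
  rw [this, map_sum]
  simp [hrw]

lemma colSpaceE_mul_le {m n p : ℕ} (A : Matrix (Fin m) (Fin n) ℝ)
    (B : Matrix (Fin n) (Fin p) ℝ) : colSpaceE (A * B) ≤ colSpaceE A := by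
  rw [colSpaceE, Submodule.span_le]
  rintro _ ⟨j, rfl⟩
  rw [colVec_mul]
  exact Submodule.sum_mem _ fun l _ =>
    Submodule.smul_mem _ _ (Submodule.subset_span ⟨l, rfl⟩)

/-- A square real matrix of full rank has unit determinant. -/
lemma isUnit_det_of_rank_eq {N : ℕ} (A : Matrix (Fin N) (Fin N) ℝ) (h : A.rank = N) :
    IsUnit A.det := by
  rw [← Matrix.isUnit_iff_isUnit_det, ← Matrix.mulVec_surjective_iff_isUnit]
  have hrange : LinearMap.range A.mulVecLin = ⊤ := by
    apply Submodule.eq_top_of_finrank_eq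
    rw [← Matrix.rank, h]
    simp
  intro y
  exact LinearMap.range_eq_top.mp hrange y

/-- **Guarantee of subject recovery for MEMIT.** Assume: (i) the candidate set
`Ked ∪ Knon` contains all `N` edited subjects (whose key vectors are the
columns of `K`, so `Ked` is the set of columns of `K`); (ii) the key matrix `K`
and residual matrix `R` have full column rank `N`; (iii) the edited key vectors
`Ked` and the non-edited candidate key vectors `Knon` are `δθ`-separable on
`col K`; (iv) the covariance `C` is positive definite. Let
`ΔW = R Kᵀ (C + K Kᵀ)⁻¹`, `M = ΔW C`, and let `V` be the right factor of a
compact rank-`N` SVD of `M` (so that `col V = col K`). Then the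
projection-based score `ρ(k) = ‖Π_{col V} k‖ / ‖k‖` ranks every edited subject
strictly above every non-edited candidate, and the corresponding angles
`arccos ρ` differ by at least `δθ`. -/
theorem memit_subject_recovery {din dout N : ℕ}
    (C : Matrix (Fin din) (Fin din) ℝ) (hC : C.PosDef)
    (K : Matrix (Fin din) (Fin N) ℝ) (R : Matrix (Fin dout) (Fin N) ℝ)
    (hK : K.rank = N) (hR : R.rank = N)
    (ΔW : Matrix (Fin dout) (Fin din) ℝ) (hΔW : ΔW = R * Kᵀ * (C + K * Kᵀ)⁻¹)
    (M : Matrix (Fin dout) (Fin din) ℝ) (hM : M = ΔW * C)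
    (U : Matrix (Fin dout) (Fin N) ℝ) (Sig : Matrix (Fin N) (Fin N) ℝ)
    (V : Matrix (Fin din) (Fin N) ℝ)
    (hU : Uᵀ * U = 1) (hV : Vᵀ * V = 1) (hSig : Sig.IsDiag)
    (hSigInv : IsUnit Sig.det) (hSVD : M = U * Sig * Vᵀ)
    (Ked Knon : Set (EuclideanSpace ℝ (Fin din)))
    (hKed : Ked = Set.range (colVec K))
    (hKnonFin : Knon.Finite) (hKnon0 : ∀ k ∈ Knon, k ≠ 0)
    (hdisj : Disjoint Ked Knon)
    (δθ : ℝ) (hδθ : 0 < δθ) (hδθ' : δθ < Real.pi / 2)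
    (hsep : ∀ k₁ ∈ Ked, ∀ k₂ ∈ Knon,
      angleTo (colSpaceE K) k₂ - angleTo (colSpaceE K) k₁ ≥ δθ) :
    ∀ k₁ ∈ Ked, ∀ k₂ ∈ Knon,
      angleTo (colSpaceE V) k₂ - angleTo (colSpaceE V) k₁ ≥ δθ ∧
        score (colSpaceE V) k₂ < score (colSpaceE V) k₁ := by
  classical
  -- basic invertibility facts
  have hCdet : IsUnit C.det := hC.det_pos.ne'.isUnit
  set S : Matrix (Fin din) (Fin din) ℝ := C + K * Kᵀ with hSdef
  have hKKT : (K * Kᵀ).PosSemidef := by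
    simpa [Matrix.conjTranspose_eq_transpose_of_trivial] using
      Matrix.posSemidef_self_mul_conjTranspose K
  have hS : S.PosDef := hC.add_posSemidef hKKT
  have hSdet : IsUnit S.det := hS.det_pos.ne'.isUnit
  set T : Matrix (Fin N) (Fin N) ℝ := 1 + Kᵀ * C⁻¹ * K with hTdef
  have hKCK : (Kᵀ * C⁻¹ * K).PosSemidef := by
    simpa [Matrix.conjTranspose_eq_transpose_of_trivial] using
      (hC.inv.posSemidef.conjTranspose_mul_mul_same K)
  have hT : T.PosDef := Matrix.PosDef.add_posSemidef Matrix.PosDef.one hKCK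
  have hTdet : IsUnit T.det := hT.det_pos.ne'.isUnit
  have hRRdet : IsUnit (Rᵀ * R).det := by
    apply isUnit_det_of_rank_eq
    rw [Matrix.rank_transpose_mul_self, hR]
  have hSigTdet : IsUnit Sigᵀ.det := by rwa [Matrix.det_transpose]
  -- push-through identity: S * (C⁻¹ * K) = K * T
  have h1 : S * (C⁻¹ * K) = K * T := by
    rw [hSdef, hTdef, Matrix.add_mul, Matrix.mul_add, Matrix.mul_one,
      Matrix.mul_nonsing_inv_cancel_left _ _ hCdet]
    simp [Matrix.mul_assoc]
  -- hence C * S⁻¹ * K = K * T⁻¹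
  have h2 : C * S⁻¹ * K * T = K := by
    rw [Matrix.mul_assoc (C * S⁻¹) K T, ← h1, Matrix.mul_assoc C S⁻¹ _,
      Matrix.nonsing_inv_mul_cancel_left _ _ hSdet,
      Matrix.mul_nonsing_inv_cancel_left _ _ hCdet]
  have h3 : C * S⁻¹ * K = K * T⁻¹ := by
    have h := congrArg (fun X => X * T⁻¹) h2
    simpa [Matrix.mul_nonsing_inv_cancel_right _ _ hTdet] using h
  -- compute Mᵀ
  have hCsymm : Cᵀ = C := by
    simpa [Matrix.conjTranspose_eq_transpose_of_trivial] using hC.isHermitian.eq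
  have hSsymm : Sᵀ = S := by
    rw [hSdef, Matrix.transpose_add, hCsymm, Matrix.transpose_mul, Matrix.transpose_transpose]
  have hMT : Mᵀ = K * T⁻¹ * Rᵀ := by
    rw [hM, hΔW, Matrix.transpose_mul, Matrix.transpose_mul, Matrix.transpose_mul,
      Matrix.transpose_nonsing_inv, hSsymm, hCsymm, Matrix.transpose_transpose,
      ← Matrix.mul_assoc, ← Matrix.mul_assoc, h3]
  have hMT' : Mᵀ = V * Sigᵀ * Uᵀ := by
    rw [hSVD, Matrix.transpose_mul, Matrix.transpose_mul, Matrix.transpose_transpose,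
      Matrix.mul_assoc]
  -- V factors through K
  have hVfact : V = K * (T⁻¹ * Rᵀ * U * Sigᵀ⁻¹) := by
    have : Mᵀ * U = V * Sigᵀ := by
      rw [hMT', Matrix.mul_assoc, hU, Matrix.mul_one]
    have hVeq : V = Mᵀ * U * Sigᵀ⁻¹ := by
      rw [this, Matrix.mul_nonsing_inv_cancel_right _ _ hSigTdet]
    rw [hVeq, hMT]
    simp only [Matrix.mul_assoc]
  -- K factors through V
  have hKfact : K = V * (Sigᵀ * Uᵀ * R * (Rᵀ * R)⁻¹ * T) := by
    have h4 : K * T⁻¹ * Rᵀ = V * Sigᵀ * Uᵀ := by rw [← hMT, hMT']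
    have h5 : K * T⁻¹ = V * Sigᵀ * Uᵀ * R * (Rᵀ * R)⁻¹ := by
      have := congrArg (fun X => X * R * (Rᵀ * R)⁻¹) h4
      simpa [Matrix.mul_assoc, Matrix.mul_nonsing_inv _ hRRdet,
        Matrix.mul_nonsing_inv_cancel_right _ _ hRRdet] using this
    have := congrArg (fun X => X * T) h5
    simpa [Matrix.nonsing_inv_mul_cancel_right _ _ hTdet, Matrix.mul_assoc] using this
  -- column spaces coincide
  have hspace : colSpaceE V = colSpaceE K := by
    apply le_antisymm
    · rw [hVfact]; exact colSpaceE_mul_le _ _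
    · conv_lhs => rw [hKfact]
      exact colSpaceE_mul_le _ _
  -- conclude
  intro k₁ h₁ k₂ h₂
  have hsep' := hsep k₁ h₁ k₂ h₂
  rw [hspace]
  refine ⟨hsep', ?_⟩
  by_contra hcon
  push_neg at hcon
  have hs₁ : (0:ℝ) ≤ score (colSpaceE K) k₁ := div_nonneg (norm_nonneg _) (norm_nonneg _)
  have : Real.arccos (score (colSpaceE K) k₂) ≤ Real.arccos (score (colSpaceE K) k₁) := by
    have := Real.monotone_arcsin hcon
    simp only [Real.arccos]
    linarith
  have : angleTo (colSpaceE K) k₂ - angleTo (colSpaceE K) k₁ ≤ 0 := by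
    simp only [angleTo]; linarith
  linarith
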